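/- arXiv:2207.13535 — 2 statements merged into one kernel-verified Lean document; each statement's English description precedes it below -/
import Mathlib

section
/- Let H be a Hopf algebra with modular pair in involution (δ, 1), meaning δ is a character with S_δ² = id where S_δ(h) = Σ δ(h₍₁₎)S(h₂₎). Then the cyclic operator on H⊗H given by τ₂(h¹ ⊗ h²) = S_δ(h¹)·(h² ⊗ 1) = Σ S_δ(h¹)₍₁₎h² ⊗ S_δ(h¹)₍₂₎ satisfies τ₂³ = id on H ⊗ H. -/
open TensorProduct

/-- The `δ`-twisted antipode `S_δ(h) = Σ δ(h₍₁₎) S(h₍₂₎)`. -/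
noncomputable def twistedAntipode {k H : Type*} [Field k] [Ring H] [HopfAlgebra k H]
    (δ : H →ₐ[k] k) : H →ₗ[k] H :=
  (TensorProduct.lid k H).toLinearMap ∘ₗ
    TensorProduct.map δ.toLinearMap (HopfAlgebra.antipode (R := k)) ∘ₗ Coalgebra.comul

/-- The cyclic operator `τ₂(h¹ ⊗ h²) = S_δ(h¹)·(h² ⊗ 1)`, where `H` acts diagonally
on `H ⊗ H` via the coproduct: `h·(a⊗b) = Σ h₍₁₎a ⊗ h₍₂₎b`, i.e. by left
multiplication by `Δ(h)` in the algebra `H ⊗ H`. -/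
noncomputable def cyclicTau2 {k H : Type*} [Field k] [Ring H] [HopfAlgebra k H]
    (δ : H →ₐ[k] k) : H ⊗[k] H →ₗ[k] H ⊗[k] H :=
  TensorProduct.lift
    (((LinearMap.mul k (H ⊗[k] H)).comp
        (Coalgebra.comul ∘ₗ twistedAntipode δ)).compl₂
      ((TensorProduct.mk k H H).flip 1))

section Aux

open Coalgebra HopfAlgebra

variable {k H : Type*} [Field k] [Ring H] [HopfAlgebra k H]

local notation "𝒮" => HopfAlgebra.antipode (R := k) (A := H)



/-- Three-leg Sweedler reassociation: `∑ f(a₍₁₁₎, a₍₁₂₎, a₍₂₎) = ∑ f(a₍₁₎, a₍₂₁₎, a₍₂₂₎)`. -/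
theorem threeleg {M : Type*} [AddCommMonoid M] [Module k M]
    (f : H → H → H → M)
    (hax : ∀ x x' y z, f (x + x') y z = f x y z + f x' y z)
    (hsx : ∀ (c : k) (x y z : H), f (c • x) y z = c • f x y z)
    (hay : ∀ x y y' z, f x (y + y') z = f x y z + f x y' z)
    (hsy : ∀ (c : k) (x y z : H), f x (c • y) z = c • f x y z)
    (haz : ∀ x y z z', f x y (z + z') = f x y z + f x y z')
    (hsz : ∀ (c : k) (x y z : H), f x y (c • z) = c • f x y z)
    {ι : Type*} {κ Λ : ι → Type*} {a : H} (r : Coalgebra.Repr k a ι)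
    (v : ∀ i, Coalgebra.Repr k (r.left i) (κ i)) (w : ∀ i, Coalgebra.Repr k (r.right i) (Λ i)) :
    ∑ i ∈ r.index, ∑ m ∈ (v i).index, f ((v i).left m) ((v i).right m) (r.right i)
      = ∑ i ∈ r.index, ∑ n ∈ (w i).index, f (r.left i) ((w i).left n) ((w i).right n) := by
  let F3 : H →ₗ[k] H →ₗ[k] H →ₗ[k] M := LinearMap.mk₂ k
    (fun x y => ⟨⟨fun z => f x y z, haz x y⟩, fun c z => hsz c x y z⟩)
    (fun x x' y => LinearMap.ext fun z => hax x x' y z)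
    (fun c x y => LinearMap.ext fun z => hsx c x y z)
    (fun x y y' => LinearMap.ext fun z => hay x y y' z)
    (fun c x y => LinearMap.ext fun z => hsy c x y z)
  have key := Coalgebra.sum_tmul_tmul_eq r v w
  have h2 := congrArg (TensorProduct.lift ((TensorProduct.uncurry (σ₁₂ := RingHom.id k) (M := H) (N := H) (P₂ := M)) ∘ₗ F3)) key
  simpa [map_sum, F3] using h2



/-- A representation of `comul (a*b)` built from representations of `comul a`, `comul b`. -/
noncomputable def reprMul {ι κ : Type*} {a b : H} (r : Coalgebra.Repr k a ι)
    (s : Coalgebra.Repr k b κ) :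
    Coalgebra.Repr k (a * b) (ι × κ) where
  index := r.index ×ˢ s.index
  left p := r.left p.1 * s.left p.2
  right p := r.right p.1 * s.right p.2
  eq := by
    rw [Finset.sum_product]
    simp only [← Algebra.TensorProduct.tmul_mul_tmul]
    rw [← Finset.sum_mul_sum, r.eq, s.eq, Bialgebra.comul_mul]

@[simp] lemma reprMul_index {ι κ : Type*} {a b : H} (r : Coalgebra.Repr k a ι)
    (s : Coalgebra.Repr k b κ) :
    (reprMul r s).index = r.index ×ˢ s.index := rfl
@[simp] lemma reprMul_left {ι κ : Type*} {a b : H} (r : Coalgebra.Repr k a ι)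
    (s : Coalgebra.Repr k b κ) (p) :
    (reprMul r s).left p = r.left p.1 * s.left p.2 := rfl
@[simp] lemma reprMul_right {ι κ : Type*} {a b : H} (r : Coalgebra.Repr k a ι)
    (s : Coalgebra.Repr k b κ) (p) :
    (reprMul r s).right p = r.right p.1 * s.right p.2 := rfl

lemma antipode_one' : 𝒮 (1 : H) = 1 := by
  have := mul_antipode_rTensor_comul_apply (R := k) (A := H) (1:H)
  simpa [Algebra.TensorProduct.one_def] using this

/-- `W a = ∑ S(a₍₂₎) ⊗ S(a₍₁₎)`. -/
noncomputable def Wmap (k : Type*) {H : Type*} [Field k] [Ring H] [HopfAlgebra k H] :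
    H →ₗ[k] H ⊗[k] H :=
  (TensorProduct.comm k H H).toLinearMap ∘ₗ
    TensorProduct.map (HopfAlgebra.antipode (R := k)) (HopfAlgebra.antipode (R := k)) ∘ₗ
      Coalgebra.comul

lemma Wmap_apply {ι : Type*} {a : H} (r : Coalgebra.Repr k a ι) :
    Wmap k a = ∑ i ∈ r.index, 𝒮 (r.right i) ⊗ₜ[k] 𝒮 (r.left i) := by
  simp [Wmap, ← r.eq, map_sum]

lemma sum_counit_smul_left {ι : Type*} {a : H} (r : Coalgebra.Repr k a ι) :
    ∑ i ∈ r.index, Coalgebra.counit (R := k) (r.left i) • r.right i = a := by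
  have h2 := congrArg (TensorProduct.lid k H) (Coalgebra.sum_counit_tmul_eq (R := k) r)
  rw [map_sum] at h2
  simpa only [TensorProduct.lid_tmul, one_smul] using h2

lemma sum_counit_smul_right {ι : Type*} {a : H} (r : Coalgebra.Repr k a ι) :
    ∑ i ∈ r.index, Coalgebra.counit (R := k) (r.right i) • r.left i = a := by
  have h2 := congrArg (TensorProduct.rid k H) (Coalgebra.sum_tmul_counit_eq (R := k) r)
  rw [map_sum] at h2
  simpa only [TensorProduct.rid_tmul, one_smul] using h2

lemma K2 {ι : Type*} (c₁ : H) {c₂ : H} (r2 : Coalgebra.Repr k c₂ ι) :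
    ∑ n ∈ r2.index, (𝒮 (r2.left n) ⊗ₜ[k] 𝒮 c₁) * Coalgebra.comul (R := k) (r2.right n)
      = (1 : H) ⊗ₜ[k] (𝒮 c₁ * c₂) := by
  calc
    ∑ n ∈ r2.index, (𝒮 (r2.left n) ⊗ₜ[k] 𝒮 c₁) * Coalgebra.comul (R := k) (r2.right n)
        = ∑ n ∈ r2.index, ∑ p ∈ (ℛ k (r2.right n)).index,
          (𝒮 (r2.left n) * (ℛ k (r2.right n)).left p) ⊗ₜ[k] (𝒮 c₁ * (ℛ k (r2.right n)).right p) := by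
        refine Finset.sum_congr rfl fun n _ => ?_
        rw [← (ℛ k (r2.right n)).eq, Finset.mul_sum]
        simp [Algebra.TensorProduct.tmul_mul_tmul]
    _ = ∑ n ∈ r2.index, ∑ p ∈ (ℛ k (r2.left n)).index,
          (𝒮 ((ℛ k (r2.left n)).left p) * (ℛ k (r2.left n)).right p) ⊗ₜ[k] (𝒮 c₁ * r2.right n) := by
        refine (threeleg (fun x y z => (𝒮 x * y) ⊗ₜ[k] (𝒮 c₁ * z)) ?_ ?_ ?_ ?_ ?_ ?_ r2 _ _).symm
        all_goals intros
        all_goals simp [tmul_add, add_tmul, smul_tmul, tmul_smul, add_mul, mul_add,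
          smul_mul_assoc, mul_smul_comm]
    _ = ∑ n ∈ r2.index, Coalgebra.counit (R := k) (r2.left n) • ((1:H) ⊗ₜ[k] (𝒮 c₁ * r2.right n)) := by
        refine Finset.sum_congr rfl fun n _ => ?_
        rw [← TensorProduct.sum_tmul, HopfAlgebra.sum_antipode_mul_eq_smul]
        simp [smul_tmul']
    _ = (1 : H) ⊗ₜ[k] (𝒮 c₁ * c₂) := by
        simp_rw [← TensorProduct.tmul_smul, ← TensorProduct.tmul_sum]
        congr 1
        simp_rw [← mul_smul_comm]
        rw [← Finset.mul_sum, sum_counit_smul_left]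

lemma Klem {ι : Type*} {c : H} (rc : Coalgebra.Repr k c ι) :
    ∑ i ∈ rc.index, Wmap k (rc.left i) * Coalgebra.comul (R := k) (rc.right i)
      = Coalgebra.counit (R := k) c • ((1 : H) ⊗ₜ[k] (1 : H)) := by
  calc
    ∑ i ∈ rc.index, Wmap k (rc.left i) * Coalgebra.comul (R := k) (rc.right i)
        = ∑ i ∈ rc.index, ∑ m ∈ (ℛ k (rc.left i)).index,
            (𝒮 ((ℛ k (rc.left i)).right m) ⊗ₜ[k] 𝒮 ((ℛ k (rc.left i)).left m)) *
              Coalgebra.comul (R := k) (rc.right i) := by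
          refine Finset.sum_congr rfl fun i _ => ?_
          rw [Wmap_apply (ℛ k (rc.left i)), Finset.sum_mul]
    _ = ∑ i ∈ rc.index, ∑ n ∈ (ℛ k (rc.right i)).index,
            (𝒮 ((ℛ k (rc.right i)).left n) ⊗ₜ[k] 𝒮 (rc.left i)) *
              Coalgebra.comul (R := k) ((ℛ k (rc.right i)).right n) := by
          refine threeleg (fun x y z => (𝒮 y ⊗ₜ[k] 𝒮 x) * Coalgebra.comul (R := k) z)
            ?_ ?_ ?_ ?_ ?_ ?_ rc _ _
          all_goals intros
          all_goals simp [tmul_add, add_tmul, smul_tmul, tmul_smul, add_mul, mul_add,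
            smul_mul_assoc, mul_smul_comm]
    _ = ∑ i ∈ rc.index, (1:H) ⊗ₜ[k] (𝒮 (rc.left i) * rc.right i) := by
          exact Finset.sum_congr rfl fun i _ => K2 (rc.left i) (ℛ k (rc.right i))
    _ = Coalgebra.counit (R := k) c • ((1 : H) ⊗ₜ[k] (1 : H)) := by
          rw [← TensorProduct.tmul_sum, HopfAlgebra.sum_antipode_mul_eq_smul rc, tmul_smul]

lemma wayA {ι : Type*} {Λ : ι → Type*} {a : H} (r : Coalgebra.Repr k a ι)
    (w : ∀ i, Coalgebra.Repr k (r.right i) (Λ i)) :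
    ∑ i ∈ r.index, ∑ n ∈ (w i).index,
        Wmap k (r.left i) * Coalgebra.comul (R := k) ((w i).left n * 𝒮 ((w i).right n))
      = Wmap k a := by
  calc
    ∑ i ∈ r.index, ∑ n ∈ (w i).index,
        Wmap k (r.left i) * Coalgebra.comul (R := k) ((w i).left n * 𝒮 ((w i).right n))
        = ∑ i ∈ r.index, Coalgebra.counit (R := k) (r.right i) • Wmap k (r.left i) := by
          refine Finset.sum_congr rfl fun i _ => ?_
          rw [← Finset.mul_sum, ← map_sum, HopfAlgebra.sum_mul_antipode_eq_smul (w i),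
            map_smul, Bialgebra.comul_one, mul_smul_comm, mul_one]
    _ = Wmap k a := by
          simp_rw [← map_smul, ← map_sum, sum_counit_smul_right r]

lemma wayB {ι : Type*} {κ Λ : ι → Type*} {a : H} (r : Coalgebra.Repr k a ι)
    (v : ∀ i, Coalgebra.Repr k (r.left i) (κ i))
    (w : ∀ i, Coalgebra.Repr k (r.right i) (Λ i)) :
    ∑ i ∈ r.index, ∑ n ∈ (w i).index,
        Wmap k (r.left i) * Coalgebra.comul (R := k) ((w i).left n * 𝒮 ((w i).right n))
      = Coalgebra.comul (R := k) (𝒮 a) := by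
  calc
    ∑ i ∈ r.index, ∑ n ∈ (w i).index,
        Wmap k (r.left i) * Coalgebra.comul (R := k) ((w i).left n * 𝒮 ((w i).right n))
        = ∑ i ∈ r.index, ∑ n ∈ (w i).index,
            Wmap k (r.left i) * (Coalgebra.comul (R := k) ((w i).left n) *
              Coalgebra.comul (R := k) (𝒮 ((w i).right n))) := by
          refine Finset.sum_congr rfl fun i _ => Finset.sum_congr rfl fun n _ => ?_
          rw [Bialgebra.comul_mul]
    _ = ∑ i ∈ r.index, ∑ m ∈ (v i).index,
            Wmap k ((v i).left m) * (Coalgebra.comul (R := k) ((v i).right m) *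
              Coalgebra.comul (R := k) (𝒮 (r.right i))) := by
          refine (threeleg (fun x y z => Wmap k x *
            (Coalgebra.comul (R := k) y * Coalgebra.comul (R := k) (𝒮 z)))
            ?_ ?_ ?_ ?_ ?_ ?_ r v w).symm
          all_goals intros
          all_goals simp [add_mul, mul_add, smul_mul_assoc, mul_smul_comm]
    _ = ∑ i ∈ r.index, Coalgebra.counit (R := k) (r.left i) •
            Coalgebra.comul (R := k) (𝒮 (r.right i)) := by
          refine Finset.sum_congr rfl fun i _ => ?_
          simp_rw [← mul_assoc]
          rw [← Finset.sum_mul, Klem (v i), smul_mul_assoc, ← Algebra.TensorProduct.one_def, one_mul]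
    _ = Coalgebra.comul (R := k) (𝒮 a) := by
          simp_rw [← map_smul, ← map_sum, sum_counit_smul_left r]

lemma comul_antipode_eq (a : H) : Coalgebra.comul (R := k) (𝒮 a) = Wmap k a := by
  rw [← wayB (ℛ k a) (fun i => ℛ k ((ℛ k a).left i)) (fun i => ℛ k ((ℛ k a).right i)),
    wayA (ℛ k a) (fun i => ℛ k ((ℛ k a).right i))]

lemma comul_antipode {ι : Type*} {a : H} (r : Coalgebra.Repr k a ι) :
    Coalgebra.comul (R := k) (𝒮 a) = ∑ i ∈ r.index, 𝒮 (r.right i) ⊗ₜ[k] 𝒮 (r.left i) := by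
  rw [comul_antipode_eq, Wmap_apply r]

/-- A representation of `comul (S a)` from one of `comul a`. -/
noncomputable def reprS {ι : Type*} {a : H} (r : Coalgebra.Repr k a ι) :
    Coalgebra.Repr k (𝒮 a) ι where
  index := r.index
  left i := 𝒮 (r.right i)
  right i := 𝒮 (r.left i)
  eq := (comul_antipode r).symm

lemma mulA {ι κ : Type*} {a b : H} (ra : Coalgebra.Repr k a ι) (rb : Coalgebra.Repr k b κ) :
    ∑ i ∈ ra.index, ∑ j ∈ rb.index, (Coalgebra.counit (R := k) (ra.left i * rb.left j)) •
      (𝒮 (rb.right j) * 𝒮 (ra.right i)) = 𝒮 b * 𝒮 a := by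
  calc
    ∑ i ∈ ra.index, ∑ j ∈ rb.index, (Coalgebra.counit (R := k) (ra.left i * rb.left j)) •
        (𝒮 (rb.right j) * 𝒮 (ra.right i))
      = ∑ i ∈ ra.index, Coalgebra.counit (R := k) (ra.left i) • (𝒮 b * 𝒮 (ra.right i)) := by
        refine Finset.sum_congr rfl fun i _ => ?_
        simp_rw [Bialgebra.counit_mul, mul_smul]
        rw [← Finset.smul_sum]
        congr 1
        simp_rw [← smul_mul_assoc]
        rw [← Finset.sum_mul]
        simp_rw [← map_smul]
        rw [← map_sum, sum_counit_smul_left rb]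
    _ = 𝒮 b * 𝒮 a := by
        simp_rw [← mul_smul_comm]
        rw [← Finset.mul_sum]
        simp_rw [← map_smul]
        rw [← map_sum, sum_counit_smul_left ra]

lemma mulB {ι κ : Type*} {κa Λa : ι → Type*} {κb Λb : κ → Type*} {a b : H}
    (ra : Coalgebra.Repr k a ι) (rb : Coalgebra.Repr k b κ)
    (va : ∀ i, Coalgebra.Repr k (ra.left i) (κa i)) (wa : ∀ i, Coalgebra.Repr k (ra.right i) (Λa i))
    (vb : ∀ j, Coalgebra.Repr k (rb.left j) (κb j)) (wb : ∀ j, Coalgebra.Repr k (rb.right j) (Λb j)) :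
    ∑ i ∈ ra.index, ∑ j ∈ rb.index, (Coalgebra.counit (R := k) (ra.left i * rb.left j)) •
      (𝒮 (rb.right j) * 𝒮 (ra.right i)) = 𝒮 (a * b) := by
  calc
    ∑ i ∈ ra.index, ∑ j ∈ rb.index, (Coalgebra.counit (R := k) (ra.left i * rb.left j)) •
        (𝒮 (rb.right j) * 𝒮 (ra.right i))
      = ∑ i ∈ ra.index, ∑ m ∈ (va i).index, ∑ j ∈ rb.index, ∑ n ∈ (vb j).index,
          𝒮 ((va i).left m * (vb j).left n) * ((va i).right m * ((vb j).right n *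
            (𝒮 (rb.right j) * 𝒮 (ra.right i)))) := by
        refine Finset.sum_congr rfl fun i _ => ?_
        rw [← Finset.sum_comm]
        refine Finset.sum_congr rfl fun j _ => ?_
        have h := HopfAlgebra.sum_antipode_mul_eq_smul (R := k) (reprMul (va i) (vb j))
        conv_lhs => rw [← one_mul (𝒮 (rb.right j) * 𝒮 (ra.right i)), ← smul_mul_assoc, ← h]
        rw [Finset.sum_mul, reprMul_index]
        simp only [reprMul_left, reprMul_right, mul_assoc]
        exact Finset.sum_product _ _ _
    _ = ∑ i ∈ ra.index, ∑ m ∈ (wa i).index, ∑ j ∈ rb.index, ∑ n ∈ (vb j).index,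
          𝒮 (ra.left i * (vb j).left n) * ((wa i).left m * ((vb j).right n *
            (𝒮 (rb.right j) * 𝒮 ((wa i).right m)))) := by
        refine threeleg (fun x y z => ∑ j ∈ rb.index, ∑ n ∈ (vb j).index,
            𝒮 (x * (vb j).left n) * (y * ((vb j).right n * (𝒮 (rb.right j) * 𝒮 z))))
          ?_ ?_ ?_ ?_ ?_ ?_ ra va wa
        all_goals intros
        all_goals simp [add_mul, mul_add, smul_mul_assoc, mul_smul_comm,
          Finset.sum_add_distrib, Finset.smul_sum]
    _ = ∑ i ∈ ra.index, ∑ m ∈ (wa i).index, ∑ j ∈ rb.index, ∑ q ∈ (wb j).index,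
          𝒮 (ra.left i * rb.left j) * ((wa i).left m * ((wb j).left q *
            (𝒮 ((wb j).right q) * 𝒮 ((wa i).right m)))) := by
        refine Finset.sum_congr rfl fun i _ => Finset.sum_congr rfl fun m _ => ?_
        exact threeleg (fun x y z =>
            𝒮 (ra.left i * x) * ((wa i).left m * (y * (𝒮 z * 𝒮 ((wa i).right m)))))
          (by intros; simp [add_mul, mul_add]) (by intros; simp [smul_mul_assoc, mul_smul_comm])
          (by intros; simp [add_mul, mul_add]) (by intros; simp [smul_mul_assoc, mul_smul_comm])
          (by intros; simp [add_mul, mul_add]) (by intros; simp [smul_mul_assoc, mul_smul_comm])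
          rb vb wb
    _ = ∑ i ∈ ra.index, ∑ m ∈ (wa i).index, ∑ j ∈ rb.index,
          Coalgebra.counit (R := k) (rb.right j) •
            (𝒮 (ra.left i * rb.left j) * ((wa i).left m * 𝒮 ((wa i).right m))) := by
        refine Finset.sum_congr rfl fun i _ => Finset.sum_congr rfl fun m _ =>
          Finset.sum_congr rfl fun j _ => ?_
        rw [← Finset.mul_sum, ← Finset.mul_sum]
        simp_rw [← mul_assoc]
        rw [← Finset.sum_mul, HopfAlgebra.sum_mul_antipode_eq_smul (wb j), smul_mul_assoc,
          one_mul, mul_smul_comm]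
    _ = ∑ i ∈ ra.index, ∑ m ∈ (wa i).index,
          𝒮 (ra.left i * b) * ((wa i).left m * 𝒮 ((wa i).right m)) := by
        refine Finset.sum_congr rfl fun i _ => Finset.sum_congr rfl fun m _ => ?_
        simp_rw [← smul_mul_assoc]
        rw [← Finset.sum_mul]
        congr 1
        simp_rw [← map_smul]
        rw [← map_sum]
        congr 1
        simp_rw [← mul_smul_comm]
        rw [← Finset.mul_sum, sum_counit_smul_right rb]
    _ = ∑ i ∈ ra.index, Coalgebra.counit (R := k) (ra.right i) • 𝒮 (ra.left i * b) := by
        refine Finset.sum_congr rfl fun i _ => ?_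
        rw [← Finset.mul_sum, HopfAlgebra.sum_mul_antipode_eq_smul (wa i), mul_smul_comm, mul_one]
    _ = 𝒮 (a * b) := by
        simp_rw [← map_smul]
        rw [← map_sum]
        congr 1
        simp_rw [← smul_mul_assoc]
        rw [← Finset.sum_mul, sum_counit_smul_right ra]

theorem antipode_mul' (a b : H) : 𝒮 (a * b) = 𝒮 b * 𝒮 a := by
  rw [← mulB (ℛ k a) (ℛ k b) (fun i => ℛ k _) (fun i => ℛ k _) (fun j => ℛ k _) (fun j => ℛ k _),
    mulA (ℛ k a) (ℛ k b)]

variable (δ : H →ₐ[k] k)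

/-- `θ(a) = ∑ δ(a₍₁₎) a₍₂₎`. -/
noncomputable def thetaMap (δ : H →ₐ[k] k) : H →ₗ[k] H :=
  (TensorProduct.lid k H).toLinearMap ∘ₗ
    TensorProduct.map δ.toLinearMap LinearMap.id ∘ₗ Coalgebra.comul

lemma theta_apply {ι : Type*} {a : H} (r : Coalgebra.Repr k a ι) :
    thetaMap δ a = ∑ i ∈ r.index, δ (r.left i) • r.right i := by
  simp [thetaMap, ← r.eq, map_sum]

lemma sdelta_apply {ι : Type*} {a : H} (r : Coalgebra.Repr k a ι) :
    twistedAntipode δ a = ∑ i ∈ r.index, δ (r.left i) • 𝒮 (r.right i) := by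
  simp [twistedAntipode, ← r.eq, map_sum]

lemma antipode_theta (a : H) : 𝒮 (thetaMap δ a) = twistedAntipode δ a := by
  rw [theta_apply δ (ℛ k a), sdelta_apply δ (ℛ k a), map_sum]
  simp_rw [map_smul]

lemma theta_mul (a b : H) : thetaMap δ (a * b) = thetaMap δ a * thetaMap δ b := by
  calc
    thetaMap δ (a * b)
        = ∑ p ∈ (ℛ k a).index ×ˢ (ℛ k b).index,
            δ ((reprMul (ℛ k a) (ℛ k b)).left p) • (reprMul (ℛ k a) (ℛ k b)).right p := by
          rw [theta_apply δ (reprMul (ℛ k a) (ℛ k b))]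
          rfl
    _ = ∑ i ∈ (ℛ k a).index, ∑ j ∈ (ℛ k b).index,
            δ ((reprMul (ℛ k a) (ℛ k b)).left (i, j)) • (reprMul (ℛ k a) (ℛ k b)).right (i, j) :=
          Finset.sum_product _ _ _
    _ = thetaMap δ a * thetaMap δ b := by
          rw [theta_apply δ (ℛ k a), theta_apply δ (ℛ k b), Finset.sum_mul_sum]
          refine Finset.sum_congr rfl fun i _ => Finset.sum_congr rfl fun j _ => ?_
          simp only [reprMul_left, reprMul_right, map_mul, smul_mul_assoc, mul_smul_comm,
            smul_smul]
          rw [mul_comm (δ ((ℛ k a).left i)) (δ ((ℛ k b).left j))]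

lemma sdelta_mul (a b : H) :
    twistedAntipode δ (a * b) = twistedAntipode δ b * twistedAntipode δ a := by
  rw [← antipode_theta, ← antipode_theta, ← antipode_theta, theta_mul, antipode_mul']

lemma comul_sdelta {ι : Type*} {a : H} (r : Coalgebra.Repr k a ι) :
    Coalgebra.comul (R := k) (twistedAntipode δ a)
      = ∑ i ∈ r.index, 𝒮 (r.right i) ⊗ₜ[k] twistedAntipode δ (r.left i) := by
  calc
    Coalgebra.comul (R := k) (twistedAntipode δ a)
        = ∑ i ∈ r.index, δ (r.left i) • Coalgebra.comul (R := k) (𝒮 (r.right i)) := by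
          rw [sdelta_apply δ r, map_sum]
          simp_rw [map_smul]
    _ = ∑ i ∈ r.index, ∑ m ∈ (ℛ k (r.right i)).index,
          𝒮 ((ℛ k (r.right i)).right m) ⊗ₜ[k] (δ (r.left i) • 𝒮 ((ℛ k (r.right i)).left m)) := by
          refine Finset.sum_congr rfl fun i _ => ?_
          rw [comul_antipode (ℛ k (r.right i)), Finset.smul_sum]
          simp_rw [← TensorProduct.tmul_smul]
    _ = ∑ i ∈ r.index, ∑ m ∈ (ℛ k (r.left i)).index,
          𝒮 (r.right i) ⊗ₜ[k] (δ ((ℛ k (r.left i)).left m) • 𝒮 ((ℛ k (r.left i)).right m)) := by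
          refine (threeleg (fun x y z => 𝒮 z ⊗ₜ[k] (δ x • 𝒮 y)) ?_ ?_ ?_ ?_ ?_ ?_ r _ _).symm
          all_goals intros
          all_goals simp [tmul_add, add_tmul, smul_tmul, tmul_smul, add_smul, smul_smul,
            mul_comm]
    _ = ∑ i ∈ r.index, 𝒮 (r.right i) ⊗ₜ[k] twistedAntipode δ (r.left i) := by
          refine Finset.sum_congr rfl fun i _ => ?_
          rw [← TensorProduct.tmul_sum, ← sdelta_apply δ (ℛ k (r.left i))]

lemma tau2_tmul {ι : Type*} (a b : H) (r : Coalgebra.Repr k a ι) :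
    cyclicTau2 δ (a ⊗ₜ[k] b)
      = ∑ i ∈ r.index, (𝒮 (r.right i) * b) ⊗ₜ[k] twistedAntipode δ (r.left i) := by
  simp only [cyclicTau2, TensorProduct.lift.tmul, LinearMap.compl₂_apply,
    LinearMap.comp_apply, LinearMap.mul_apply', TensorProduct.mk_apply, LinearMap.flip_apply]
  rw [comul_sdelta δ r, Finset.sum_mul]
  refine Finset.sum_congr rfl fun i _ => ?_
  rw [Algebra.TensorProduct.tmul_mul_tmul, mul_one]

lemma Hconv {ι : Type*} {c : H} (rc : Coalgebra.Repr k c ι) :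
    ∑ j ∈ rc.index, thetaMap δ (rc.left j) * 𝒮 (rc.right j) = δ c • (1 : H) := by
  calc
    ∑ j ∈ rc.index, thetaMap δ (rc.left j) * 𝒮 (rc.right j)
        = ∑ j ∈ rc.index, ∑ p ∈ (ℛ k (rc.left j)).index,
            δ ((ℛ k (rc.left j)).left p) • ((ℛ k (rc.left j)).right p * 𝒮 (rc.right j)) := by
          refine Finset.sum_congr rfl fun j _ => ?_
          rw [theta_apply δ (ℛ k (rc.left j)), Finset.sum_mul]
          simp_rw [smul_mul_assoc]
    _ = ∑ j ∈ rc.index, ∑ q ∈ (ℛ k (rc.right j)).index,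
            δ (rc.left j) • ((ℛ k (rc.right j)).left q * 𝒮 ((ℛ k (rc.right j)).right q)) := by
          refine threeleg (fun x y z => δ x • (y * 𝒮 z)) ?_ ?_ ?_ ?_ ?_ ?_ rc _ _
          all_goals intros
          all_goals simp [add_smul, smul_smul, mul_add, add_mul, smul_mul_assoc,
            mul_smul_comm, mul_comm]
    _ = ∑ j ∈ rc.index, δ (rc.left j) • (Coalgebra.counit (R := k) (rc.right j) • (1 : H)) := by
          refine Finset.sum_congr rfl fun j _ => ?_
          rw [← Finset.smul_sum, HopfAlgebra.sum_mul_antipode_eq_smul (ℛ k (rc.right j))]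
    _ = δ c • (1 : H) := by
          have hδ := congrArg δ (sum_counit_smul_right (k := k) rc)
          rw [map_sum] at hδ
          simp only [map_smul, smul_eq_mul] at hδ
          simp_rw [smul_smul]
          rw [← Finset.sum_smul]
          congr 1
          rw [← hδ]
          exact Finset.sum_congr rfl fun j _ => mul_comm _ _

lemma E1 {ι : Type*} {Λ : ι → Type*} {a : H} (r : Coalgebra.Repr k a ι)
    (u : ∀ i, Coalgebra.Repr k (r.right i) (Λ i)) :
    ∑ i ∈ r.index, ∑ m ∈ (u i).index,
        (thetaMap δ (r.left i) * 𝒮 ((u i).left m)) ⊗ₜ[k] ((u i).right m)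
      = (1 : H) ⊗ₜ[k] thetaMap δ a := by
  calc
    ∑ i ∈ r.index, ∑ m ∈ (u i).index,
        (thetaMap δ (r.left i) * 𝒮 ((u i).left m)) ⊗ₜ[k] ((u i).right m)
      = ∑ i ∈ r.index, ∑ m ∈ (ℛ k (r.left i)).index,
          (thetaMap δ ((ℛ k (r.left i)).left m) * 𝒮 ((ℛ k (r.left i)).right m)) ⊗ₜ[k]
            (r.right i) := by
        refine (threeleg (fun x y z => (thetaMap δ x * 𝒮 y) ⊗ₜ[k] z) ?_ ?_ ?_ ?_ ?_ ?_ r _ u).symm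
        all_goals intros
        all_goals simp [tmul_add, add_tmul, smul_tmul, tmul_smul, add_mul, mul_add,
          smul_mul_assoc, mul_smul_comm]
    _ = ∑ i ∈ r.index, (δ (r.left i) • (1 : H)) ⊗ₜ[k] (r.right i) := by
        refine Finset.sum_congr rfl fun i _ => ?_
        rw [← TensorProduct.sum_tmul, Hconv δ (ℛ k (r.left i))]
    _ = (1 : H) ⊗ₜ[k] thetaMap δ a := by
        simp_rw [TensorProduct.smul_tmul]
        rw [← TensorProduct.tmul_sum, ← theta_apply δ r]

lemma Elem {ι : Type*} {Λ : ι → Type*} {a : H} (r : Coalgebra.Repr k a ι)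
    (u : ∀ i, Coalgebra.Repr k (r.right i) (Λ i)) :
    ∑ i ∈ r.index, ∑ m ∈ (u i).index,
        (𝒮 (𝒮 ((u i).left m)) * twistedAntipode δ (r.left i)) ⊗ₜ[k] ((u i).right m)
      = (1 : H) ⊗ₜ[k] thetaMap δ a := by
  calc
    ∑ i ∈ r.index, ∑ m ∈ (u i).index,
        (𝒮 (𝒮 ((u i).left m)) * twistedAntipode δ (r.left i)) ⊗ₜ[k] ((u i).right m)
      = ∑ i ∈ r.index, ∑ m ∈ (u i).index,
          (𝒮 (thetaMap δ (r.left i) * 𝒮 ((u i).left m))) ⊗ₜ[k] ((u i).right m) := by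
        refine Finset.sum_congr rfl fun i _ => Finset.sum_congr rfl fun m _ => ?_
        rw [← antipode_theta, ← antipode_mul']
    _ = (1 : H) ⊗ₜ[k] thetaMap δ a := by
        have h1 := congrArg (LinearMap.rTensor H (HopfAlgebra.antipode (R := k) (A := H)))
          (E1 δ r u)
        simp only [map_sum, LinearMap.rTensor_tmul] at h1
        rw [h1, antipode_one']

lemma tau2_sq (hinv : ∀ x : H, twistedAntipode δ (twistedAntipode δ x) = x) (h g : H) :
    cyclicTau2 δ (cyclicTau2 δ (h ⊗ₜ[k] g))
      = ∑ n ∈ (ℛ k g).index,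
          𝒮 ((ℛ k g).right n) ⊗ₜ[k] (twistedAntipode δ ((ℛ k g).left n) * h) := by
  calc
    cyclicTau2 δ (cyclicTau2 δ (h ⊗ₜ[k] g))
        = ∑ i ∈ (ℛ k h).index, cyclicTau2 δ
            ((𝒮 ((ℛ k h).right i) * g) ⊗ₜ[k] twistedAntipode δ ((ℛ k h).left i)) := by
          rw [tau2_tmul δ h g (ℛ k h), map_sum]
    _ = ∑ i ∈ (ℛ k h).index, ∑ p ∈ (ℛ k ((ℛ k h).right i)).index ×ˢ (ℛ k g).index,
          (𝒮 (𝒮 ((ℛ k ((ℛ k h).right i)).left p.1) * (ℛ k g).right p.2) *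
            twistedAntipode δ ((ℛ k h).left i)) ⊗ₜ[k]
          twistedAntipode δ (𝒮 ((ℛ k ((ℛ k h).right i)).right p.1) * (ℛ k g).left p.2) := by
          refine Finset.sum_congr rfl fun i _ => ?_
          rw [tau2_tmul δ _ _ (reprMul (reprS (ℛ k ((ℛ k h).right i))) (ℛ k g))]
          rfl
    _ = ∑ i ∈ (ℛ k h).index, ∑ m ∈ (ℛ k ((ℛ k h).right i)).index, ∑ n ∈ (ℛ k g).index,
          (𝒮 ((ℛ k g).right n) * (𝒮 (𝒮 ((ℛ k ((ℛ k h).right i)).left m)) *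
            twistedAntipode δ ((ℛ k h).left i))) ⊗ₜ[k]
          (twistedAntipode δ ((ℛ k g).left n) *
            twistedAntipode δ (𝒮 ((ℛ k ((ℛ k h).right i)).right m))) := by
          refine Finset.sum_congr rfl fun i _ => ?_
          refine (Finset.sum_product _ _ _).trans ?_
          refine Finset.sum_congr rfl fun m _ => Finset.sum_congr rfl fun n _ => ?_
          rw [antipode_mul', sdelta_mul, mul_assoc]
    _ = ∑ i ∈ (ℛ k h).index, ∑ n ∈ (ℛ k g).index, ∑ m ∈ (ℛ k ((ℛ k h).right i)).index,
          (𝒮 ((ℛ k g).right n) * (𝒮 (𝒮 ((ℛ k ((ℛ k h).right i)).left m)) *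
            twistedAntipode δ ((ℛ k h).left i))) ⊗ₜ[k]
          (twistedAntipode δ ((ℛ k g).left n) *
            twistedAntipode δ (𝒮 ((ℛ k ((ℛ k h).right i)).right m))) :=
          Finset.sum_congr rfl fun i _ => Finset.sum_comm
    _ = ∑ n ∈ (ℛ k g).index, ∑ i ∈ (ℛ k h).index, ∑ m ∈ (ℛ k ((ℛ k h).right i)).index,
          (𝒮 ((ℛ k g).right n) * (𝒮 (𝒮 ((ℛ k ((ℛ k h).right i)).left m)) *
            twistedAntipode δ ((ℛ k h).left i))) ⊗ₜ[k]
          (twistedAntipode δ ((ℛ k g).left n) *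
            twistedAntipode δ (𝒮 ((ℛ k ((ℛ k h).right i)).right m))) :=
          Finset.sum_comm
    _ = ∑ n ∈ (ℛ k g).index,
          𝒮 ((ℛ k g).right n) ⊗ₜ[k] (twistedAntipode δ ((ℛ k g).left n) * h) := by
          refine Finset.sum_congr rfl fun n _ => ?_
          have hE := congrArg (TensorProduct.map (LinearMap.mulLeft k (𝒮 ((ℛ k g).right n)))
            ((LinearMap.mulLeft k (twistedAntipode δ ((ℛ k g).left n))) ∘ₗ
              (twistedAntipode δ) ∘ₗ (HopfAlgebra.antipode (R := k) (A := H))))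
            (Elem δ (ℛ k h) (fun i => ℛ k ((ℛ k h).right i)))
          simp only [map_sum, TensorProduct.map_tmul, LinearMap.mulLeft_apply,
            LinearMap.comp_apply] at hE
          rw [hE, mul_one, antipode_theta, hinv]

lemma tau2_cube (hinv : ∀ x : H, twistedAntipode δ (twistedAntipode δ x) = x) (h g : H) :
    cyclicTau2 δ (cyclicTau2 δ (cyclicTau2 δ (h ⊗ₜ[k] g))) = h ⊗ₜ[k] g := by
  rw [tau2_sq δ hinv h g, map_sum]
  calc
    ∑ n ∈ (ℛ k g).index, cyclicTau2 δ
        (𝒮 ((ℛ k g).right n) ⊗ₜ[k] (twistedAntipode δ ((ℛ k g).left n) * h))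
      = ∑ n ∈ (ℛ k g).index, ∑ m ∈ (ℛ k ((ℛ k g).right n)).index,
          (𝒮 (𝒮 ((ℛ k ((ℛ k g).right n)).left m)) *
            (twistedAntipode δ ((ℛ k g).left n) * h)) ⊗ₜ[k]
          twistedAntipode δ (𝒮 ((ℛ k ((ℛ k g).right n)).right m)) := by
        refine Finset.sum_congr rfl fun n _ => ?_
        rw [tau2_tmul δ _ _ (reprS (ℛ k ((ℛ k g).right n)))]
        rfl
    _ = h ⊗ₜ[k] g := by
        have hE := congrArg (TensorProduct.map (LinearMap.mulRight k h)
            ((twistedAntipode δ) ∘ₗ (HopfAlgebra.antipode (R := k) (A := H))))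
          (Elem δ (ℛ k g) (fun n => ℛ k ((ℛ k g).right n)))
        simp only [map_sum, TensorProduct.map_tmul, LinearMap.mulRight_apply,
          LinearMap.comp_apply] at hE
        simp_rw [← mul_assoc]
        rw [hE, one_mul, antipode_theta, hinv]

end Aux

/-- If `(δ, 1)` is a modular pair in involution, i.e. `S_δ² = id`, then the cyclic
operator `τ₂` satisfies `τ₂³ = id` on `H ⊗ H`. -/
theorem cyclicTau2_cube_eq_id {k H : Type*} [Field k] [Ring H] [HopfAlgebra k H]
    (δ : H →ₐ[k] k) (hinv : ∀ h : H, twistedAntipode δ (twistedAntipode δ h) = h) :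
    cyclicTau2 δ ∘ₗ cyclicTau2 δ ∘ₗ cyclicTau2 δ = LinearMap.id := by
  apply TensorProduct.ext'
  intro h g
  simp only [LinearMap.comp_apply, LinearMap.id_coe, id_eq]
  exact tau2_cube δ hinv h g
end

section
/- In the Hopf algebra H₁ (the n=1 case of Hₙ) with generators X, Y, δ₁ satisfying [Y,X] = X, [Y, δ₁] = δ₁, [X, δ₁] = δ₂ (setting δ₂ = [X,δ₁]), coproducts Δ(Y) = Y⊗1+1⊗Y, Δ(X) = X⊗1+1⊗X+δ₁⊗Y, Δ(δ₁) = δ₁⊗1+1⊗δ₁, and antipode S(Y) = −Y, S(X) = −X+δ₁Y, S(δ₁) = −δ₁, the twisted antipode S_δ with δ(Y)=1, δ(X)=δ(δ₁)=0 satisfies S_δ(Y) = −Y+1, S_δ(X) = −X+δ₁Y, S_δ(δ₁) = −δ₁, and S_δ² = id on the generators. -/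
open TensorProduct

/-- In the Hopf algebra `H₁` with generators `X, Y, δ₁` satisfying
`[Y,X] = X`, `[Y,δ₁] = δ₁`, `[X,δ₁] = δ₂` (with `δ₂ := [X,δ₁]` commuting with `δ₁`),
coproducts `Δ(Y) = Y⊗1+1⊗Y`, `Δ(X) = X⊗1+1⊗X+δ₁⊗Y`, `Δ(δ₁) = δ₁⊗1+1⊗δ₁`,
antipode `S(Y) = −Y`, `S(X) = −X+δ₁Y`, `S(δ₁) = −δ₁`, and the character
`δ(Y) = 1`, `δ(X) = δ(δ₁) = 0`, the twisted antipode satisfies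
`S_δ(Y) = −Y+1`, `S_δ(X) = −X+δ₁Y`, `S_δ(δ₁) = −δ₁`, and `S_δ² = id` on the
generators. -/
theorem H1_twistedAntipode_involutive {k H : Type*} [Field k] [Ring H]
    [HopfAlgebra k H] (X Y d1 : H)
    (hYX : Y * X - X * Y = X)
    (hYd : Y * d1 - d1 * Y = d1)
    (hdd : d1 * (X * d1 - d1 * X) = (X * d1 - d1 * X) * d1)
    (hΔY : Coalgebra.comul (R := k) Y = Y ⊗ₜ[k] 1 + 1 ⊗ₜ[k] Y)
    (hΔX : Coalgebra.comul (R := k) X = X ⊗ₜ[k] 1 + 1 ⊗ₜ[k] X + d1 ⊗ₜ[k] Y)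
    (hΔd : Coalgebra.comul (R := k) d1 = d1 ⊗ₜ[k] 1 + 1 ⊗ₜ[k] d1)
    (hSY : HopfAlgebra.antipode (R := k) Y = -Y)
    (hSX : HopfAlgebra.antipode (R := k) X = -X + d1 * Y)
    (hSd : HopfAlgebra.antipode (R := k) d1 = -d1)
    (δ : H →ₐ[k] k) (hδY : δ Y = 1) (hδX : δ X = 0) (hδd : δ d1 = 0) :
    twistedAntipode δ Y = -Y + 1 ∧
      twistedAntipode δ X = -X + d1 * Y ∧
      twistedAntipode δ d1 = -d1 ∧
      twistedAntipode δ (twistedAntipode δ Y) = Y ∧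
      twistedAntipode δ (twistedAntipode δ X) = X ∧
      twistedAntipode δ (twistedAntipode δ d1) = d1 := by
  rcases subsingleton_or_nontrivial H with hsub | hnt
  · exact ⟨Subsingleton.elim _ _, Subsingleton.elim _ _, Subsingleton.elim _ _,
      Subsingleton.elim _ _, Subsingleton.elim _ _, Subsingleton.elim _ _⟩
  have hTA : ∀ h : H, twistedAntipode δ h =
      (TensorProduct.lid k H) (TensorProduct.map δ.toLinearMap
        (HopfAlgebra.antipode (R := k)) (Coalgebra.comul h)) := fun h => rfl
  have hΔ1 : Coalgebra.comul (R := k) (1 : H) = (1:H) ⊗ₜ[k] (1:H) := by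
    rw [Bialgebra.comul_one, Algebra.TensorProduct.one_def]
  have hS1 : HopfAlgebra.antipode (R := k) (1 : H) = 1 := by
    have := HopfAlgebra.mul_antipode_rTensor_comul_apply (R := k) (A := H) (1 : H)
    simpa [hΔ1] using this
  have hinj : Function.Injective (algebraMap k H) := (algebraMap k H).injective
  have hεY : Coalgebra.counit (R := k) Y = 0 := by
    have := HopfAlgebra.mul_antipode_rTensor_comul_apply (R := k) (A := H) Y
    rw [hΔY] at this
    simp [hSY, hS1] at this
    exact hinj (by simpa using this.symm)
  have hεd : Coalgebra.counit (R := k) d1 = 0 := by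
    have := HopfAlgebra.mul_antipode_rTensor_comul_apply (R := k) (A := H) d1
    rw [hΔd] at this
    simp [hSd, hS1] at this
    exact hinj (by simpa using this.symm)
  have hΔdY : Coalgebra.comul (R := k) (d1 * Y) =
      (d1 * Y) ⊗ₜ[k] 1 + d1 ⊗ₜ[k] Y + Y ⊗ₜ[k] d1 + 1 ⊗ₜ[k] (d1 * Y) := by
    rw [Bialgebra.comul_mul, hΔd, hΔY]
    simp [add_mul, mul_add, Algebra.TensorProduct.tmul_mul_tmul]
    abel
  have hSdY : HopfAlgebra.antipode (R := k) (d1 * Y) = Y * d1 := by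
    have := HopfAlgebra.mul_antipode_lTensor_comul_apply (R := k) (A := H) (d1 * Y)
    rw [hΔdY] at this
    simp [hSY, hSd, hS1, Bialgebra.counit_mul, hεY, hεd] at this
    linear_combination (norm := abel) this
  have htY : twistedAntipode δ Y = -Y + 1 := by
    rw [hTA, hΔY]
    simp [hSY, hS1, hδY, map_one]
    abel
  have htX : twistedAntipode δ X = -X + d1 * Y := by
    rw [hTA, hΔX]
    simp [hSY, hSX, hS1, hδY, hδX, hδd, map_one]
  have htd : twistedAntipode δ d1 = -d1 := by
    rw [hTA, hΔd]
    simp [hSd, hS1, hδd, map_one]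
  have ht1 : twistedAntipode δ (1 : H) = 1 := by
    rw [hTA, hΔ1]
    simp [hS1, map_one]
  have htdY : twistedAntipode δ (d1 * Y) = d1 * Y := by
    rw [hTA, hΔdY]
    simp [hSY, hSd, hS1, hSdY, hδY, hδd, map_one, map_mul]
    linear_combination (norm := noncomm_ring) hYd
  refine ⟨htY, htX, htd, ?_, ?_, ?_⟩
  · rw [htY, map_add, map_neg, htY, ht1]; abel
  · rw [htX, map_add, map_neg, htX, htdY]; abel
  · rw [htd, map_neg, htd, neg_neg]
end
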